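/- Let d ≥ 1, δ ∈ (0,1), T₀ > 0 and C_B > 0. Then there exist C > 0 and ε₀ ∈ (0,1] such that for every ε ∈ (0,ε₀], every continuous B̂ : [0,T₀] → ℓ¹_{3−δ}(ℤ^d) with sup_{T∈[0,T₀]} ‖B̂(T)‖_{ℓ¹_{3−δ}} ≤ C_B, and every t ∈ [0, T₀/ε²]: Σ_{K∈ℤ^d, ε|K| ≤ 1/10} |∫₀^t e^{λ(e₁+εK)(t−τ)} (−4ε⁴K₁³ − ε⁵K₁⁴) B̂(K, ε²τ) dτ| ≤ C ε². -/

import Mathlib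

open MeasureTheory Set

/-- The weight `(1 + |K|²)^{r/2}` on the lattice `ℤ^d`. -/
noncomputable def wt (d : ℕ) (r : ℝ) (K : Fin d → ℤ) : ℝ :=
  (1 + ∑ i, ((K i : ℝ)) ^ 2) ^ (r / 2)

/-- Continuity of `T ↦ B(T)` on `[0,T₀]` with respect to the `ℓ¹_r` norm. -/
def NormContOn (d : ℕ) (r T₀ : ℝ) (B : ℝ → (Fin d → ℤ) → ℂ) : Prop :=
  ∀ T ∈ Set.Icc (0 : ℝ) T₀, ∀ η > 0, ∃ ν > 0, ∀ T' ∈ Set.Icc (0 : ℝ) T₀,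
    |T' - T| < ν → ∑' K : Fin d → ℤ, ‖B T' K - B T K‖ * wt d r K < η

private lemma aux_rpow_le_exp {c y : ℝ} (hc0 : 0 ≤ c) (hc1 : c ≤ 1) (hy : 0 ≤ y) :
    y ^ c ≤ Real.exp y := by
  rcases le_or_gt y 1 with h | h
  · exact (Real.rpow_le_one hy h hc0).trans (by linarith [Real.add_one_le_exp y])
  · calc y ^ c ≤ y ^ (1:ℝ) := Real.rpow_le_rpow_of_exponent_le h.le hc1
      _ = y := Real.rpow_one y
      _ ≤ Real.exp y := by linarith [Real.add_one_le_exp y]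

private lemma wt_one_le {d : ℕ} {r : ℝ} (hr : 0 ≤ r) (K : Fin d → ℤ) : 1 ≤ wt d r K := by
  unfold wt
  have h1 : (0:ℝ) ≤ ∑ i, ((K i : ℝ))^2 := by positivity
  exact Real.one_le_rpow (by linarith) (by linarith)

private lemma contOn_of_normContOn {d : ℕ} {r T₀ : ℝ} (hr : 0 ≤ r) {B : ℝ → (Fin d → ℤ) → ℂ}
    (hB : NormContOn d r T₀ B)
    (hS : ∀ T ∈ Set.Icc (0:ℝ) T₀, Summable (fun K => ‖B T K‖ * wt d r K))
    (K : Fin d → ℤ) : ContinuousOn (fun T => B T K) (Set.Icc 0 T₀) := by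
  rw [Metric.continuousOn_iff]
  intro T hT η hη
  obtain ⟨ν, hν, h⟩ := hB T hT η hη
  refine ⟨ν, hν, fun T' hT' hd' => ?_⟩
  have hw1 : 1 ≤ wt d r K := wt_one_le hr K
  have hsum : Summable (fun K => ‖B T' K - B T K‖ * wt d r K) := by
    refine Summable.of_nonneg_of_le
      (fun K => mul_nonneg (norm_nonneg _) (le_trans zero_le_one (wt_one_le hr _)))
      (fun K => ?_) ((hS T' hT').add (hS T hT))
    have h1 := norm_sub_le (B T' K) (B T K)
    have hw : (0:ℝ) ≤ wt d r K := le_trans zero_le_one (wt_one_le hr K)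
    calc ‖B T' K - B T K‖ * wt d r K ≤ (‖B T' K‖ + ‖B T K‖) * wt d r K :=
          mul_le_mul_of_nonneg_right h1 hw
      _ = ‖B T' K‖ * wt d r K + ‖B T K‖ * wt d r K := by ring
  calc dist (B T' K) (B T K) = ‖B T' K - B T K‖ := dist_eq_norm _ _
    _ ≤ ‖B T' K - B T K‖ * wt d r K := le_mul_of_one_le_right (norm_nonneg _) hw1
    _ ≤ ∑' K, ‖B T' K - B T K‖ * wt d r K := Summable.le_tsum hsum K
        (fun j _ => mul_nonneg (norm_nonneg _) (le_trans zero_le_one (wt_one_le hr _)))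
    _ < η := h T' hT' (by rwa [Real.dist_eq] at hd')

private lemma key_decay {δ ε s aa : ℝ} (hδ0 : 0 < δ) (hδ1 : δ < 1) (hε : 0 < ε)
    (hs : 0 < s) (ha : 1 ≤ aa) :
    Real.exp (-(3*ε^2*aa^2*s)) * aa ^ (δ:ℝ) ≤ ε ^ (-δ) * s ^ (-(δ/2)) := by
  have ha0 : 0 < aa := lt_of_lt_of_le one_pos ha
  set y : ℝ := 3*ε^2*aa^2*s with hy
  have hy0 : 0 < y := by positivity
  have h1 : aa ^ (δ:ℝ) = (aa^2) ^ (δ/2) := by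
    rw [← Real.rpow_natCast aa 2, ← Real.rpow_mul ha0.le,
      show ((2:ℕ):ℝ) * (δ/2) = δ by push_cast; ring]
  have h2 : (aa^2 : ℝ) = y / (3*ε^2*s) := by
    rw [hy]; field_simp
  have h3 : (aa^2 : ℝ) ^ (δ/2) = y ^ (δ/2) / (3*ε^2*s) ^ (δ/2) := by
    rw [h2, Real.div_rpow hy0.le (by positivity)]
  have h4 : y ^ (δ/2) ≤ Real.exp y := aux_rpow_le_exp (by linarith) (by linarith) hy0.le
  have h5 : Real.exp (-y) * aa ^ (δ:ℝ) ≤ 1 / (3*ε^2*s) ^ (δ/2) := by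
    rw [h1, h3, ← mul_div_assoc]
    have h6 : (0:ℝ) < (3*ε^2*s) ^ (δ/2) := Real.rpow_pos_of_pos (by positivity) _
    rw [div_le_div_iff₀ h6 h6]
    have : Real.exp (-y) * y ^ (δ/2) ≤ 1 := by
      calc Real.exp (-y) * y ^ (δ/2) ≤ Real.exp (-y) * Real.exp y :=
            mul_le_mul_of_nonneg_left h4 (Real.exp_nonneg _)
        _ = 1 := by rw [← Real.exp_add]; norm_num
    nlinarith [h6.le, Real.exp_nonneg (-y), Real.rpow_nonneg hy0.le (δ/2)]
  have h7 : (1:ℝ) / (3*ε^2*s) ^ (δ/2) = (3*ε^2*s) ^ (-(δ/2)) := by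
    rw [Real.rpow_neg (by positivity)]; rw [one_div]
  have h8 : (3*ε^2*s) ^ (-(δ/2)) ≤ (ε^2*s) ^ (-(δ/2)) := by
    apply Real.rpow_le_rpow_of_nonpos (by positivity) (by nlinarith) (by linarith)
  have h9 : (ε^2*s : ℝ) ^ (-(δ/2)) = ε ^ (-δ) * s ^ (-(δ/2)) := by
    rw [Real.mul_rpow (by positivity) hs.le]
    congr 1
    rw [← Real.rpow_natCast ε 2, ← Real.rpow_mul hε.le,
      show ((2:ℕ):ℝ) * (-(δ/2)) = -δ by push_cast; ring]
  calc Real.exp (-y) * aa ^ (δ:ℝ) ≤ 1 / (3*ε^2*s) ^ (δ/2) := h5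
    _ = (3*ε^2*s) ^ (-(δ/2)) := h7
    _ ≤ (ε^2*s) ^ (-(δ/2)) := h8
    _ = ε ^ (-δ) * s ^ (-(δ/2)) := h9

private lemma core_bound {δ ε s k S Q : ℝ} (hδ0 : 0 < δ) (hδ1 : δ < 1) (hε0 : 0 < ε)
    (hs : 0 < s) (ha : 1 ≤ |k|) (hkS : k^2 ≤ S) (hQ : 0 ≤ Q)
    (hsmall : ε * Real.sqrt S ≤ 1/10) :
    Real.exp ((-(1-(1+ε*k)^2)^2 - 4*Q) * s) * |(-4*ε^4*k^3 - ε^5*k^4)| ≤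
      5*ε^4*(ε ^ (-δ)) * s ^ (-(δ/2)) * (1+S) ^ ((3-δ)/2) := by
  set a : ℝ := |k| with hadef
  have ha0 : 0 < a := lt_of_lt_of_le one_pos ha
  have hS0 : 0 ≤ S := le_trans (sq_nonneg k) hkS
  have hεa : ε * a ≤ 1/10 := by
    calc ε * a = ε * Real.sqrt (k^2) := by rw [Real.sqrt_sq_eq_abs]
      _ ≤ ε * Real.sqrt S := mul_le_mul_of_nonneg_left (Real.sqrt_le_sqrt hkS) hε0.le
      _ ≤ 1/10 := hsmall
  -- |m| ≤ 5 ε⁴ a³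
  have e3 : |k^3| = a^3 := by rw [abs_pow]
  have e4 : (k^4 : ℝ) = a^4 := by
    rw [hadef, ← abs_pow]; exact (abs_of_nonneg (by positivity)).symm
  have hk3u : k^3 ≤ a^3 := le_trans (le_abs_self _) (le_of_eq e3)
  have hk3l : -(a^3) ≤ k^3 := by
    have := neg_abs_le (k^3); rw [e3] at this; linarith
  have hεa4 : ε^5 * a^4 ≤ (1/10) * (ε^4 * a^3) := by
    have h := mul_le_mul_of_nonneg_right hεa (show (0:ℝ) ≤ ε^4 * a^3 by positivity)
    nlinarith
  have hm : |(-4*ε^4*k^3 - ε^5*k^4)| ≤ 5*ε^4*a^3 := by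
    have c4 : (0:ℝ) ≤ ε^4 := by positivity
    have hu : ε^4 * (-(a^3)) ≤ ε^4 * k^3 := mul_le_mul_of_nonneg_left hk3l c4
    have hl : ε^4 * k^3 ≤ ε^4 * a^3 := mul_le_mul_of_nonneg_left hk3u c4
    have h5nn : (0:ℝ) ≤ ε^5*a^4 := by positivity
    have h43nn : (0:ℝ) ≤ ε^4*a^3 := by positivity
    have e4' : ε^5*k^4 = ε^5*a^4 := by rw [e4]
    rw [abs_le]
    constructor <;> linarith
  -- Λ ≤ -3 ε² k²
  have hx : |ε * k| ≤ 1/10 := by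
    rw [abs_mul, abs_of_nonneg hε0.le]; exact hεa
  have hΛ : (-(1-(1+ε*k)^2)^2 - 4*Q) ≤ -(3*ε^2*a^2*s)/s := by
    rw [neg_div, ← neg_div, neg_div, mul_div_assoc]
    rw [div_self hs.ne']
    have hx1 := (abs_le.mp hx).1
    have hx2 := (abs_le.mp hx).2
    have ha2 : a^2 = k^2 := sq_abs k
    nlinarith [sq_nonneg (ε*k), sq_nonneg (ε*k*(ε*k+2))]
  have hE : Real.exp ((-(1-(1+ε*k)^2)^2 - 4*Q) * s) ≤ Real.exp (-(3*ε^2*a^2*s)) := by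
    apply Real.exp_le_exp.mpr
    calc (-(1-(1+ε*k)^2)^2 - 4*Q) * s ≤ (-(3*ε^2*a^2*s)/s) * s :=
          mul_le_mul_of_nonneg_right hΛ hs.le
      _ = -(3*ε^2*a^2*s) := by field_simp
  -- a³ = a^{3-δ} · a^δ and a^{3-δ} ≤ wt
  have haa : (a:ℝ)^3 = a ^ ((3-δ):ℝ) * a ^ (δ:ℝ) := by
    rw [← Real.rpow_add ha0, show (3-δ+δ : ℝ) = ((3:ℕ):ℝ) by push_cast; ring,
      Real.rpow_natCast]
  have hwt : a ^ ((3-δ):ℝ) ≤ (1+S) ^ ((3-δ)/2) := by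
    have h1 : a ^ ((3-δ):ℝ) = (a^2) ^ ((3-δ)/2) := by
      rw [← Real.rpow_natCast a 2, ← Real.rpow_mul ha0.le,
        show ((2:ℕ):ℝ) * ((3-δ)/2) = 3-δ by push_cast; ring]
    rw [h1]
    apply Real.rpow_le_rpow (by positivity) _ (by linarith)
    rw [sq_abs]; linarith
  have hkey := key_decay hδ0 hδ1 hε0 hs ha
  calc Real.exp ((-(1-(1+ε*k)^2)^2 - 4*Q) * s) * |(-4*ε^4*k^3 - ε^5*k^4)|
      ≤ Real.exp (-(3*ε^2*a^2*s)) * (5*ε^4*a^3) := by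
        apply mul_le_mul hE hm (abs_nonneg _) (Real.exp_nonneg _)
    _ = 5*ε^4 * (a ^ ((3-δ):ℝ) * (Real.exp (-(3*ε^2*a^2*s)) * a ^ (δ:ℝ))) := by
        rw [haa]; ring
    _ ≤ 5*ε^4 * ((1+S) ^ ((3-δ)/2) * (ε ^ (-δ) * s ^ (-(δ/2)))) := by
        apply mul_le_mul_of_nonneg_left _ (by positivity)
        apply mul_le_mul hwt hkey (by positivity) (by positivity)
    _ = 5*ε^4*(ε ^ (-δ)) * s ^ (-(δ/2)) * (1+S) ^ ((3-δ)/2) := by ring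

set_option maxHeartbeats 1000000 in
/-- the critical-mode Duhamel contribution of the linear residual
term involving the regular part `B̂ ∈ ℓ¹_{3−δ}` is `O(ε²)` on `[0, T₀/ε²]`.
Here `λ(e₁+εK) = −(1−(1+εK₁)²)² − 4Σ_{i≠1}(εK_i)²` and the multiplier is
`−4ε⁴K₁³ − ε⁵K₁⁴`; the sum runs over `ε|K| ≤ 1/10`. -/
theorem critical_linear_residual_B (d : ℕ) (hd : 0 < d)
    (δ T₀ CB : ℝ) (hδ0 : 0 < δ) (hδ1 : δ < 1) (hT₀ : 0 < T₀) (hCB : 0 < CB) :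
    ∃ C > 0, ∃ ε₀ ∈ Set.Ioc (0 : ℝ) 1, ∀ ε ∈ Set.Ioc (0 : ℝ) ε₀,
      ∀ B : ℝ → (Fin d → ℤ) → ℂ,
        NormContOn d (3 - δ) T₀ B →
        (∀ T ∈ Set.Icc (0 : ℝ) T₀, Summable (fun K => ‖B T K‖ * wt d (3 - δ) K)) →
        (∀ T ∈ Set.Icc (0 : ℝ) T₀, ∑' K : Fin d → ℤ, ‖B T K‖ * wt d (3 - δ) K ≤ CB) →
        ∀ t ∈ Set.Icc (0 : ℝ) (T₀ / ε ^ 2),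
          (∑' K : Fin d → ℤ,
            if ε * Real.sqrt (∑ i, ((K i : ℝ)) ^ 2) ≤ 1 / 10 then
              ‖∫ τ in (0 : ℝ)..t,
                (Real.exp ((-(1 - (1 + ε * (K ⟨0, hd⟩ : ℝ)) ^ 2) ^ 2
                      - 4 * ∑ i ∈ Finset.univ.filter (fun i => i ≠ (⟨0, hd⟩ : Fin d)),
                          (ε * (K i : ℝ)) ^ 2) * (t - τ))
                    * (-4 * ε ^ 4 * (K ⟨0, hd⟩ : ℝ) ^ 3
                      - ε ^ 5 * (K ⟨0, hd⟩ : ℝ) ^ 4)) • B (ε ^ 2 * τ) K‖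
            else 0) ≤ C * ε ^ 2 := by
  have hr0 : (0:ℝ) ≤ 3 - δ := by linarith
  have he0 : (0:ℝ) < 1 - δ/2 := by linarith
  refine ⟨5 * CB * T₀ ^ (1 - δ/2) / (1 - δ/2), by positivity, 1, ⟨one_pos, le_refl 1⟩, ?_⟩
  rintro ε ⟨hε0, hε1⟩ B hBc hBs hBle t ⟨ht0, htT⟩
  set e : ℝ := 1 - δ/2 with hedef
  set r : ℝ := 3 - δ with hrdef
  have hmem : ∀ τ ∈ Icc (0:ℝ) t, ε^2*τ ∈ Icc (0:ℝ) T₀ := by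
    intro τ hτ
    constructor
    · exact mul_nonneg (by positivity) hτ.1
    · calc ε^2*τ ≤ ε^2*(T₀/ε^2) :=
          mul_le_mul_of_nonneg_left (le_trans hτ.2 htT) (by positivity)
        _ = T₀ := by field_simp
  set h : ℝ → ℝ := fun τ => (t - τ) ^ (-(δ/2)) with hhdef
  set bb : (Fin d → ℤ) → ℝ → ℝ := fun K τ => ‖B (ε^2*τ) K‖ with hbbdef
  set g : (Fin d → ℤ) → ℝ → ℝ :=
    fun K τ => 5*ε^4*(ε^(-δ)) * h τ * (bb K τ * wt d r K) with hgdef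
  have hwt1 : ∀ K : Fin d → ℤ, 1 ≤ wt d r K := wt_one_le hr0
  have hwt0 : ∀ K : Fin d → ℤ, 0 ≤ wt d r K := fun K => le_trans zero_le_one (hwt1 K)
  have hInth : IntervalIntegrable h volume 0 t := by
    have h1 : IntervalIntegrable (fun x : ℝ => x ^ (-(δ/2))) volume t 0 :=
      intervalIntegral.intervalIntegrable_rpow' (by linarith)
    simpa [hhdef] using h1.comp_sub_left t
  have hIh : IntegrableOn h (Ioo 0 t) volume :=
    ((intervalIntegrable_iff_integrableOn_Ioc_of_le ht0).1 hInth).mono_set Ioo_subset_Ioc_self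
  have hh0 : ∀ τ ∈ Ioo (0:ℝ) t, 0 ≤ h τ :=
    fun τ hτ => Real.rpow_nonneg (by linarith [hτ.2]) _
  have hhmeas : Measurable h := by fun_prop
  have hbmeas : ∀ K, AEStronglyMeasurable (bb K) (volume.restrict (Ioo 0 t)) := by
    intro K
    have hc : ContinuousOn (fun τ : ℝ => B (ε^2*τ) K) (Icc 0 t) := by
      apply (contOn_of_normContOn hr0 hBc hBs K).comp
        ((continuous_const.mul continuous_id).continuousOn)
      intro τ hτ; exact hmem τ hτ
    exact ((hc.norm).mono Ioo_subset_Icc_self).aestronglyMeasurable measurableSet_Ioo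
  have hbbd : ∀ τ ∈ Icc (0:ℝ) t, ∀ K, bb K τ ≤ CB := by
    intro τ hτ K
    have hmm := hmem τ hτ
    calc bb K τ ≤ bb K τ * wt d r K := le_mul_of_one_le_right (norm_nonneg _) (hwt1 K)
      _ ≤ ∑' K, ‖B (ε^2*τ) K‖ * wt d r K :=
          Summable.le_tsum (hBs _ hmm) K (fun j _ => mul_nonneg (norm_nonneg _) (hwt0 j))
      _ ≤ CB := hBle _ hmm
  have hgnn : ∀ K, ∀ τ ∈ Ioo (0:ℝ) t, 0 ≤ g K τ := by
    intro K τ hτ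
    exact mul_nonneg (mul_nonneg (by positivity) (hh0 τ hτ))
      (mul_nonneg (norm_nonneg _) (hwt0 K))
  have hgint : ∀ K, IntegrableOn (g K) (Ioo 0 t) volume := by
    intro K
    have hmaj : IntegrableOn (fun τ => (5*ε^4*(ε^(-δ)) * CB * wt d r K) * h τ) (Ioo 0 t)
        volume := hIh.const_mul _
    apply Integrable.mono hmaj
    · apply AEStronglyMeasurable.mul
      · exact (aestronglyMeasurable_const.mul hhmeas.aestronglyMeasurable)
      · exact (hbmeas K).mul_const _
    · apply ae_restrict_of_forall_mem measurableSet_Ioo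
      intro τ hτ
      have h1 : 0 ≤ h τ := hh0 τ hτ
      have h2 : bb K τ ≤ CB := hbbd τ (Ioo_subset_Icc_self hτ) K
      have h3 : 0 ≤ bb K τ := norm_nonneg _
      rw [Real.norm_eq_abs, Real.norm_eq_abs, abs_of_nonneg (hgnn K τ hτ),
        abs_of_nonneg (mul_nonneg (mul_nonneg (by positivity) (hwt0 K)) h1)]
      calc 5*ε^4*(ε^(-δ)) * h τ * (bb K τ * wt d r K)
          ≤ 5*ε^4*(ε^(-δ)) * h τ * (CB * wt d r K) := by
            apply mul_le_mul_of_nonneg_left _ (mul_nonneg (by positivity) h1)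
            exact mul_le_mul_of_nonneg_right h2 (hwt0 K)
        _ = 5*ε^4*(ε^(-δ)) * CB * wt d r K * h τ := by ring
  -- the pointwise bound
  have hpt : ∀ K : Fin d → ℤ, ε * Real.sqrt (∑ i, ((K i : ℝ)) ^ 2) ≤ 1 / 10 →
      ∀ τ ∈ Ioo (0:ℝ) t,
      ‖(Real.exp ((-(1 - (1 + ε * (K ⟨0, hd⟩ : ℝ)) ^ 2) ^ 2
            - 4 * ∑ i ∈ Finset.univ.filter (fun i => i ≠ (⟨0, hd⟩ : Fin d)),
                (ε * (K i : ℝ)) ^ 2) * (t - τ))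
          * (-4 * ε ^ 4 * (K ⟨0, hd⟩ : ℝ) ^ 3
            - ε ^ 5 * (K ⟨0, hd⟩ : ℝ) ^ 4)) • B (ε ^ 2 * τ) K‖ ≤ g K τ := by
    intro K hK τ hτ
    have hs : 0 < t - τ := by linarith [hτ.2]
    rw [norm_smul, Real.norm_eq_abs, abs_mul, Real.abs_exp]
    by_cases hk0 : (K ⟨0, hd⟩ : ℤ) = 0
    · have : ((K ⟨0, hd⟩ : ℤ) : ℝ) = 0 := by exact_mod_cast hk0
      rw [this]
      norm_num
      exact hgnn K τ hτ
    · have ha : (1:ℝ) ≤ |((K ⟨0, hd⟩ : ℤ) : ℝ)| := by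
        rw [← Int.cast_abs]
        exact_mod_cast Int.one_le_abs hk0
      have hkS : ((K ⟨0, hd⟩ : ℤ) : ℝ)^2 ≤ ∑ i, ((K i : ℝ)) ^ 2 :=
        Finset.single_le_sum (f := fun i : Fin d => ((K i : ℝ))^2)
          (fun i _ => sq_nonneg _) (Finset.mem_univ (⟨0, hd⟩ : Fin d))
      have hQ : (0:ℝ) ≤ ∑ i ∈ Finset.univ.filter (fun i => i ≠ (⟨0, hd⟩ : Fin d)),
          (ε * (K i : ℝ)) ^ 2 := Finset.sum_nonneg (fun i _ => sq_nonneg _)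
      have hcore := core_bound hδ0 hδ1 hε0 hs ha hkS hQ hK
      calc Real.exp ((-(1 - (1 + ε * (K ⟨0, hd⟩ : ℝ)) ^ 2) ^ 2
              - 4 * ∑ i ∈ Finset.univ.filter (fun i => i ≠ (⟨0, hd⟩ : Fin d)),
                  (ε * (K i : ℝ)) ^ 2) * (t - τ))
            * |(-4 * ε ^ 4 * (K ⟨0, hd⟩ : ℝ) ^ 3 - ε ^ 5 * (K ⟨0, hd⟩ : ℝ) ^ 4)|
            * ‖B (ε ^ 2 * τ) K‖
          ≤ (5*ε^4*(ε^(-δ)) * (t-τ) ^ (-(δ/2))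
              * (1 + ∑ i, ((K i : ℝ)) ^ 2) ^ ((3-δ)/2)) * ‖B (ε ^ 2 * τ) K‖ := by
            apply mul_le_mul_of_nonneg_right _ (norm_nonneg _)
            exact hcore
        _ = g K τ := by
            rw [hgdef]
            show _ = 5*ε^4*(ε^(-δ)) * ((t - τ) ^ (-(δ/2))) * (‖B (ε^2*τ) K‖ * wt d r K)
            rw [wt, hrdef]
            ring
  -- per-K bound
  have perK : ∀ K : Fin d → ℤ,
      (if ε * Real.sqrt (∑ i, ((K i : ℝ)) ^ 2) ≤ 1 / 10 then
        ‖∫ τ in (0 : ℝ)..t,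
          (Real.exp ((-(1 - (1 + ε * (K ⟨0, hd⟩ : ℝ)) ^ 2) ^ 2
                - 4 * ∑ i ∈ Finset.univ.filter (fun i => i ≠ (⟨0, hd⟩ : Fin d)),
                    (ε * (K i : ℝ)) ^ 2) * (t - τ))
              * (-4 * ε ^ 4 * (K ⟨0, hd⟩ : ℝ) ^ 3
                - ε ^ 5 * (K ⟨0, hd⟩ : ℝ) ^ 4)) • B (ε ^ 2 * τ) K‖
      else 0) ≤ ∫ τ in Ioo (0:ℝ) t, g K τ := by
    intro K
    by_cases hc : ε * Real.sqrt (∑ i, ((K i : ℝ)) ^ 2) ≤ 1 / 10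
    · rw [if_pos hc]
      calc ‖∫ τ in (0:ℝ)..t, _‖
          ≤ ∫ τ in (0:ℝ)..t,
            ‖(Real.exp ((-(1 - (1 + ε * (K ⟨0, hd⟩ : ℝ)) ^ 2) ^ 2
                  - 4 * ∑ i ∈ Finset.univ.filter (fun i => i ≠ (⟨0, hd⟩ : Fin d)),
                      (ε * (K i : ℝ)) ^ 2) * (t - τ))
                * (-4 * ε ^ 4 * (K ⟨0, hd⟩ : ℝ) ^ 3
                  - ε ^ 5 * (K ⟨0, hd⟩ : ℝ) ^ 4)) • B (ε ^ 2 * τ) K‖ :=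
            intervalIntegral.norm_integral_le_integral_norm ht0
        _ = ∫ τ in Ioo (0:ℝ) t, ‖(Real.exp ((-(1 - (1 + ε * (K ⟨0, hd⟩ : ℝ)) ^ 2) ^ 2
                  - 4 * ∑ i ∈ Finset.univ.filter (fun i => i ≠ (⟨0, hd⟩ : Fin d)),
                      (ε * (K i : ℝ)) ^ 2) * (t - τ))
                * (-4 * ε ^ 4 * (K ⟨0, hd⟩ : ℝ) ^ 3
                  - ε ^ 5 * (K ⟨0, hd⟩ : ℝ) ^ 4)) • B (ε ^ 2 * τ) K‖ := by
            rw [intervalIntegral.integral_of_le ht0, integral_Ioc_eq_integral_Ioo]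
        _ ≤ ∫ τ in Ioo (0:ℝ) t, g K τ :=
            integral_mono_of_nonneg (ae_of_all _ (fun τ => norm_nonneg _)) (hgint K)
              (ae_restrict_of_forall_mem measurableSet_Ioo (fun τ hτ => hpt K hc τ hτ))
    · rw [if_neg hc]
      exact setIntegral_nonneg measurableSet_Ioo (fun τ hτ => hgnn K τ hτ)
  -- main chain
  apply tsum_le_of_sum_le' (by positivity)
  intro F
  have step2 : ∑ K ∈ F, ∫ τ in Ioo (0:ℝ) t, g K τ
      ≤ (5*ε^4*(ε^(-δ)) * CB) * ∫ τ in Ioo (0:ℝ) t, h τ := by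
    rw [← MeasureTheory.integral_finset_sum F (fun K _ => hgint K),
      ← MeasureTheory.integral_const_mul]
    apply setIntegral_mono_on (integrable_finset_sum F fun K _ => hgint K)
      (hIh.const_mul _) measurableSet_Ioo
    intro τ hτ
    have hsum : ∑ K ∈ F, bb K τ * wt d r K ≤ CB := by
      calc ∑ K ∈ F, bb K τ * wt d r K ≤ ∑' K, ‖B (ε^2*τ) K‖ * wt d r K :=
            Summable.sum_le_tsum F (fun K _ => mul_nonneg (norm_nonneg _) (hwt0 K))
              (hBs _ (hmem τ (Ioo_subset_Icc_self hτ)))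
        _ ≤ CB := hBle _ (hmem τ (Ioo_subset_Icc_self hτ))
    calc ∑ K ∈ F, g K τ = (5*ε^4*(ε^(-δ)) * h τ) * ∑ K ∈ F, bb K τ * wt d r K := by
          rw [Finset.mul_sum]
      _ ≤ (5*ε^4*(ε^(-δ)) * h τ) * CB :=
          mul_le_mul_of_nonneg_left hsum (mul_nonneg (by positivity) (hh0 τ hτ))
      _ = 5*ε^4*(ε^(-δ)) * CB * h τ := by ring
  have hIval : ∫ τ in Ioo (0:ℝ) t, h τ = t ^ e / e := by
    rw [← integral_Ioc_eq_integral_Ioo, ← intervalIntegral.integral_of_le ht0, hhdef]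
    rw [intervalIntegral.integral_comp_sub_left (fun x : ℝ => x ^ (-(δ/2))) t]
    simp only [sub_self, sub_zero]
    rw [integral_rpow (Or.inl (by linarith))]
    rw [Real.zero_rpow (by intro hcon; linarith)]
    rw [show -(δ/2) + 1 = e by rw [hedef]; ring]
    rw [sub_zero]
  have hte : t ^ e ≤ T₀ ^ e / (ε^2) ^ e := by
    rw [← Real.div_rpow hT₀.le (by positivity)]
    exact Real.rpow_le_rpow ht0 htT he0.le
  have hpow : ε^4 * (ε^(-δ)) = ε^2 * (ε^2)^e := by
    rw [show ((ε:ℝ)^2)^e = ε^(2*e) by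
        rw [← Real.rpow_natCast ε 2, ← Real.rpow_mul hε0.le]; norm_num]
    rw [show (ε:ℝ)^4 = ε^((4:ℕ):ℝ) from (Real.rpow_natCast ε 4).symm,
        show (ε:ℝ)^2 = ε^((2:ℕ):ℝ) from (Real.rpow_natCast ε 2).symm,
        ← Real.rpow_add hε0, ← Real.rpow_add hε0]
    congr 1
    rw [hedef]; push_cast; ring
  have hfin : (5*ε^4*(ε^(-δ)) * CB) * (t ^ e / e)
      ≤ 5 * CB * T₀ ^ e / e * ε ^ 2 := by
    have hne : ((ε:ℝ)^2)^e ≠ 0 := (Real.rpow_pos_of_pos (by positivity) _).ne'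
    calc (5*ε^4*(ε^(-δ)) * CB) * (t ^ e / e)
        ≤ (5*ε^4*(ε^(-δ)) * CB) * ((T₀ ^ e / (ε^2) ^ e) / e) := by
          have hA : (0:ℝ) ≤ 5*ε^4*(ε^(-δ)) * CB := by positivity
          apply mul_le_mul_of_nonneg_left _ hA
          have h9 : (0:ℝ) ≤ 1/e := by positivity
          rw [div_eq_mul_inv, div_eq_mul_inv]
          exact mul_le_mul_of_nonneg_right hte (by positivity)
      _ = 5 * CB * T₀ ^ e / e * ε ^ 2 := by
          have hpow' : (ε:ℝ)^(-δ) = ε^2*(ε^2)^e/ε^4 := by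
            rw [eq_div_iff (pow_ne_zero 4 hε0.ne'), mul_comm]; exact hpow
          rw [hpow']
          field_simp
  calc ∑ K ∈ F, _ ≤ ∑ K ∈ F, ∫ τ in Ioo (0:ℝ) t, g K τ := Finset.sum_le_sum (fun K _ => perK K)
    _ ≤ (5*ε^4*(ε^(-δ)) * CB) * (t ^ e / e) := by rw [← hIval]; exact step2
    _ ≤ 5 * CB * T₀ ^ e / e * ε ^ 2 := hfin
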